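/- Let G be a 2-connected outerplanar graph on n ≥ 6 vertices that contains no subgraph isomorphic to the double star S_{2,2}. Then G has at most ⌊5n/4⌋ edges. -/

import Mathlib

open SimpleGraph Finset

/-- `G` contains a copy of the double star `S_{p,q}`: adjacent centers `x, y`,
with `p` leaves attached to `x` and `q` leaves attached to `y`, all distinct. -/
def ContainsDoubleStar {V : Type*} (G : SimpleGraph V) (p q : ℕ) : Prop :=
  ∃ (x y : V) (X Y : Finset V), G.Adj x y ∧ X.card = p ∧ Y.card = q ∧
    Disjoint X Y ∧ y ∉ X ∧ x ∉ Y ∧ (∀ v ∈ X, G.Adj x v) ∧ (∀ v ∈ Y, G.Adj y v)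

/-- A graph is outerplanar iff it admits a one-page book embedding: a linear
ordering of the vertices such that no two edges cross. -/
def IsOuterplanar {V : Type*} (G : SimpleGraph V) : Prop :=
  ∃ σ : V → Fin (Nat.card V), Function.Bijective σ ∧
    ∀ a b c d : V, G.Adj a b → G.Adj c d → ¬ (σ a < σ c ∧ σ c < σ b ∧ σ b < σ d)

/-- A graph is 2-connected: connected, and deleting any single vertex leaves a
connected graph. -/
def IsTwoConnected {V : Type*} (G : SimpleGraph V) : Prop :=
  G.Connected ∧ ∀ v : V, (G.induce {v}ᶜ).Connected

namespace DSAux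
open Fin.NatCast
variable {m : ℕ}

lemma buildDS {V : Type*} [DecidableEq V] (G : SimpleGraph V) (x y x1 x2 y1 y2 : V)
    (hxy : G.Adj x y) (hx1 : G.Adj x x1) (hx2 : G.Adj x x2)
    (hy1 : G.Adj y y1) (hy2 : G.Adj y y2)
    (h12 : x1 ≠ x2) (h34 : y1 ≠ y2)
    (d11 : x1 ≠ y1) (d12 : x1 ≠ y2) (d21 : x2 ≠ y1) (d22 : x2 ≠ y2)
    (hyx1 : y ≠ x1) (hyx2 : y ≠ x2) (hxy1 : x ≠ y1) (hxy2 : x ≠ y2) :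
    ContainsDoubleStar G 2 2 := by
  refine ⟨x, y, {x1, x2}, {y1, y2}, hxy, ?_, ?_, ?_, ?_, ?_, ?_, ?_⟩
  · rw [Finset.card_insert_of_notMem (by simp [h12]), Finset.card_singleton]
  · rw [Finset.card_insert_of_notMem (by simp [h34]), Finset.card_singleton]
  · simp only [Finset.disjoint_insert_left, Finset.disjoint_singleton_left, Finset.mem_insert,
      Finset.mem_singleton]
    exact ⟨by push_neg; exact ⟨d11, d12⟩, by push_neg; exact ⟨d21, d22⟩⟩
  · simp only [Finset.mem_insert, Finset.mem_singleton]
    push_neg; exact ⟨hyx1, hyx2⟩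
  · simp only [Finset.mem_insert, Finset.mem_singleton]
    push_neg; exact ⟨hxy1, hxy2⟩
  · intro v hv; rcases Finset.mem_insert.mp hv with h | h
    · exact h ▸ hx1
    · exact (Finset.mem_singleton.mp h) ▸ hx2
  · intro v hv; rcases Finset.mem_insert.mp hv with h | h
    · exact h ▸ hy1
    · exact (Finset.mem_singleton.mp h) ▸ hy2

lemma transferDS {V W : Type*} [DecidableEq V] (G : SimpleGraph V) (H : SimpleGraph W)
    (e : V ≃ W) (hadj : ∀ a b, H.Adj a b → G.Adj (e.symm a) (e.symm b))
    (h : ContainsDoubleStar H 2 2) : ContainsDoubleStar G 2 2 := by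
  obtain ⟨x, y, X, Y, h1, h2, h3, h4, h5, h6, h7, h8⟩ := h
  refine ⟨e.symm x, e.symm y, X.image e.symm, Y.image e.symm, hadj _ _ h1, ?_, ?_, ?_, ?_, ?_, ?_, ?_⟩
  · rw [Finset.card_image_of_injective _ e.symm.injective, h2]
  · rw [Finset.card_image_of_injective _ e.symm.injective, h3]
  · exact Finset.disjoint_image (e.symm.injective) |>.mpr h4
  · simp only [Finset.mem_image]; rintro ⟨v, hv, hve⟩
    exact h5 (e.symm.injective hve ▸ hv)
  · simp only [Finset.mem_image]; rintro ⟨v, hv, hve⟩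
    exact h6 (e.symm.injective hve ▸ hv)
  · simp only [Finset.mem_image]; rintro v ⟨u, hu, hue⟩
    exact hue ▸ hadj _ _ (h7 u hu)
  · simp only [Finset.mem_image]; rintro v ⟨u, hu, hue⟩
    exact hue ▸ hadj _ _ (h8 u hu)

def off (w : Fin (m+6)) (k : ℕ) : Fin (m+6):= w + (k : Fin (m+6))

lemma off_val (w : Fin (m+6)) (k : ℕ) : (off w k).val = (w.val + k) % (m+6) := by
  simp [off, Fin.val_add, Fin.val_natCast, Nat.add_mod]

lemma off_zero (w : Fin (m+6)) : off w 0 = w := by simp [off]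

lemma off_one (w : Fin (m+6)) : off w 1 = w + 1 := by simp [off]

lemma off_off (w : Fin (m+6)) (k l : ℕ) : off (off w k) l = off w (k + l) := by
  unfold off; push_cast; simp only [Nat.cast_add, add_assoc]

lemma off_cast (w : Fin (m+6)) {k l : ℕ} (h : k % (m+6) = l % (m+6)) : off w k = off w l := by
  unfold off
  congr 1
  apply Fin.ext
  simp [Fin.val_natCast, h]

lemma off_ne (w : Fin (m+6)) {k l : ℕ} (hk : k < m+6) (hl : l < m+6) (h : k ≠ l) :
    off w k ≠ off w l := by
  intro hh
  have h2 : (k : Fin (m+6)) = (l : Fin (m+6)) := add_left_cancel hh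
  have h3 := congrArg Fin.val h2
  simp only [Fin.val_natCast, Nat.mod_eq_of_lt hk, Nat.mod_eq_of_lt hl] at h3
  exact h h3

lemma off_ne0 (w : Fin (m+6)) {l : ℕ} (hl : l < m+6) (h : 0 ≠ l) : w ≠ off w l := by
  intro hh
  exact off_ne w (k := 0) (by omega) hl h (by rw [off_zero]; exact hh)

lemma off_cancel {w u : Fin (m+6)} {k : ℕ} (h : off w k = off u k) : w = u := by
  unfold off at h
  exact add_right_cancel h

lemma hmodval {k : ℕ} (hk : k < m+6) {x : ℕ} (hx : x = k + (m+6)) : x % (m+6) = k := by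
  rw [hx, Nat.add_mod_right]; exact Nat.mod_eq_of_lt hk

variable {H : SimpleGraph (Fin (m+6))}

section Ham
variable (hnc : ∀ a b c d : Fin (m+6), H.Adj a b → H.Adj c d → ¬ (a < c ∧ c < b ∧ b < d))
  (hP1 : ∀ S : Set (Fin (m+6)), S.Nonempty → Sᶜ.Nonempty →
      ∃ a ∈ S, ∃ b, b ∉ S ∧ H.Adj a b)
  (hP2 : ∀ (v : Fin (m+6)) (S : Set (Fin (m+6))), v ∉ S → S.Nonempty → (Sᶜ \ {v}).Nonempty →
      ∃ a ∈ S, ∃ b, b ∉ S ∧ b ≠ v ∧ H.Adj a b)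

include hnc hP1 hP2 in
lemma gapLemma (a : Fin (m+6)) (ha : a.val + 1 < m+6) : H.Adj a ⟨a.val+1, ha⟩ := by
  classical
  have hex : ∃ s, ∃ u w : Fin (m+6), H.Adj u w ∧ u.val ≤ a.val ∧ a.val < w.val ∧ w.val - u.val = s := by
    obtain ⟨u, hu, w, hw, hadj⟩ := hP1 {x | x.val ≤ a.val} ⟨a, by simp⟩
      ⟨⟨a.val+1, ha⟩, by simp only [Set.mem_compl_iff, Set.mem_setOf_eq]; omega⟩
    simp only [Set.mem_setOf_eq] at hu hw
    exact ⟨w.val - u.val, u, w, hadj, hu, by omega, rfl⟩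
  obtain ⟨u, w, hadj, hu, hw, hk⟩ := Nat.find_spec hex
  have hmin : ∀ c d : Fin (m+6), H.Adj c d → c.val ≤ a.val → a.val < d.val →
      w.val - u.val ≤ d.val - c.val := by
    intro c d h1 h2 h3
    by_contra hlt
    push_neg at hlt
    exact Nat.find_min hex (lt_of_lt_of_le hlt (le_of_eq hk)) ⟨c, d, h1, h2, h3, rfl⟩
  rcases Nat.lt_or_ge u.val a.val with hca | hca
  · -- case u < a : derive contradiction
    exfalso
    have hw1 : w ∈ ({x : Fin (m+6) | u.val < x.val ∧ x.val ≤ a.val}ᶜ \ {u}) := by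
      constructor
      · simp only [Set.mem_compl_iff, Set.mem_setOf_eq]; omega
      · simp only [Set.mem_singleton_iff]; intro h; rw [h] at hw; omega
    obtain ⟨c, hc, d, hd, hdu, hcd⟩ := hP2 u {x | u.val < x.val ∧ x.val ≤ a.val}
      (by simp) ⟨a, by simp only [Set.mem_setOf_eq]; omega⟩ ⟨w, hw1⟩
    simp only [Set.mem_setOf_eq] at hc hd
    push_neg at hd
    have hdu' : d.val ≠ u.val := fun h => hdu (Fin.ext h)
    by_cases h1 : d.val < u.val
    · exact hnc d c u w hcd.symm hadj ⟨h1, hc.1, by omega⟩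
    · have h2 : a.val < d.val := by omega
      by_cases h4 : w.val < d.val
      · exact hnc u w c d hadj hcd ⟨hc.1, by omega, h4⟩
      · have h3 := hmin c d hcd hc.2 h2
        omega
  · -- u.val = a.val (since u ≤ a)
    have hua : u.val = a.val := by omega
    by_cases hw1 : w.val = a.val + 1
    · have hu' : u = a := Fin.ext hua
      have hw' : w = ⟨a.val+1, ha⟩ := Fin.ext hw1
      rw [hu', hw'] at hadj; exact hadj
    · exfalso
      have hw2 : a.val + 1 < w.val := by omega
      have hu1 : u ∈ ({x : Fin (m+6) | a.val < x.val ∧ x.val < w.val}ᶜ \ {w}) := by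
        constructor
        · simp only [Set.mem_compl_iff, Set.mem_setOf_eq]; omega
        · simp only [Set.mem_singleton_iff]; intro h; rw [h] at hua; omega
      obtain ⟨c, hc, d, hd, hdw, hcd⟩ := hP2 w {x | a.val < x.val ∧ x.val < w.val}
        (by simp) ⟨⟨a.val+1, ha⟩, by simp only [Set.mem_setOf_eq]; omega⟩ ⟨u, hu1⟩
      simp only [Set.mem_setOf_eq] at hc hd
      push_neg at hd
      by_cases h1 : d.val < u.val
      · exact hnc d c u w hcd.symm hadj ⟨h1, by omega, hc.2⟩
      · by_cases h2 : d.val ≤ a.val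
        · have := hmin d c hcd.symm h2 hc.1
          omega
        · push_neg at h2
          have h3 : w.val ≤ d.val := hd h2
          have h4 : w.val < d.val := by
            rcases Nat.lt_or_eq_of_le h3 with h | h
            · exact h
            · exact absurd (Fin.ext h.symm) hdw
          exact hnc u w c d hadj hcd ⟨by omega, hc.2, h4⟩

include hnc hP1 hP2 in
lemma wrapLemma : H.Adj ⟨0, by omega⟩ ⟨m+5, by omega⟩ := by
  classical
  set z : Fin (m+6) := ⟨0, by omega⟩ with hz
  obtain ⟨a, ha, b, hb, hadj0⟩ := hP1 {z} ⟨z, rfl⟩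
    ⟨⟨1, by omega⟩, by simp only [Set.mem_compl_iff, Set.mem_singleton_iff, hz, Fin.ext_iff]; omega⟩
  have haz : a = z := ha
  rw [haz] at hadj0
  have hFne : (Finset.univ.filter (fun x => H.Adj z x)).Nonempty := ⟨b, by simp [hadj0]⟩
  set w := (Finset.univ.filter (fun x => H.Adj z x)).max' hFne with hwdef
  have hwF : H.Adj z w := by
    have := Finset.max'_mem _ hFne
    simpa using this
  by_cases hwval : w.val = m+5
  · have : w = ⟨m+5, by omega⟩ := Fin.ext hwval
    rw [this] at hwF; exact hwF
  · exfalso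
    have hwlt : w.val < m+5 := by
      have := w.isLt; omega
    have hz1 : z ∈ ({x : Fin (m+6) | w.val < x.val}ᶜ \ {w}) := by
      constructor
      · simp only [Set.mem_compl_iff, Set.mem_setOf_eq, hz]; omega
      · simp only [Set.mem_singleton_iff]
        exact hwF.ne
    obtain ⟨c, hc, d, hd, hdw, hcd⟩ := hP2 w {x | w.val < x.val}
      (by simp) ⟨⟨m+5, by omega⟩, hwlt⟩ ⟨z, hz1⟩
    simp only [Set.mem_setOf_eq] at hc hd
    push_neg at hd
    by_cases h1 : d = z
    · rw [h1] at hcd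
      have hcF : c ∈ Finset.univ.filter (fun x => H.Adj z x) := by simp [hcd.symm]
      have hle := Finset.le_max' _ c hcF
      rw [← hwdef] at hle
      have : c.val ≤ w.val := hle
      omega
    · have hdz : 0 < d.val := by
        rcases Nat.eq_zero_or_pos d.val with h | h
        · exact absurd (Fin.ext (by simp [hz, h])) h1
        · exact h
      have hdww : d.val < w.val := by
        have hne : d.val ≠ w.val := fun h => hdw (Fin.ext h)
        omega
      exact hnc z w d c hwF hcd.symm ⟨hdz, hdww, hc⟩

include hnc hP1 hP2 in
lemma ham : ∀ a : Fin (m+6), H.Adj a (a + 1) := by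
  intro a
  by_cases ha : a.val + 1 < m+6
  · have h := gapLemma hnc hP1 hP2 a ha
    have heq : a + 1 = ⟨a.val+1, ha⟩ := by
      apply Fin.ext
      simp [Fin.val_add, Nat.mod_eq_of_lt ha]
    rw [heq]; exact h
  · have ha' : a.val = m+5 := by have := a.isLt; omega
    have h2 : a + 1 = ⟨0, by omega⟩ := by
      apply Fin.ext
      simp [Fin.val_add, ha']
    have h1 : a = ⟨m+5, by omega⟩ := Fin.ext ha'
    rw [h2, h1]
    exact (wrapLemma hnc hP1 hP2).symm

end Ham

section Chord
variable (hnc : ∀ a b c d : Fin (m+6), H.Adj a b → H.Adj c d → ¬ (a < c ∧ c < b ∧ b < d))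
  (hcons : ∀ a : Fin (m+6), H.Adj a (a + 1))
  (hfree : ¬ ContainsDoubleStar H 2 2)

include hcons in
lemma step (w : Fin (m+6)) (k : ℕ) : H.Adj (off w k) (off w (k+1)) := by
  have h := hcons (off w k)
  rw [← off_one, off_off] at h
  exact h

include hcons in
lemma step0 (w : Fin (m+6)) : H.Adj w (off w 1) := by
  have h := step hcons w 0
  rw [off_zero] at h
  exact h

include hcons in
lemma stepn (w : Fin (m+6)) : H.Adj (off w (m+5)) w := by
  have h := step hcons w (m+5)
  have h2 : off w (m+5+1) = w := by
    rw [off_cast w (k := m+6) (l := 0) (by simp [Nat.mod_self]), off_zero]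
  rw [h2] at h
  exact h

include hcons in
lemma medium (i j : Fin (m+6)) (hadj : H.Adj i j) (h3 : i.val + 3 ≤ j.val)
    (h3' : j.val + 3 ≤ i.val + (m+6)) : ContainsDoubleStar H 2 2 := by
  set D := j.val - i.val with hD
  have hDlb : 3 ≤ D := by omega
  have hDub : D ≤ m+3 := by have := j.isLt; omega
  have hj : j = off i D := by
    apply Fin.ext
    rw [off_val, Nat.mod_eq_of_lt (by have := j.isLt; omega)]
    omega
  have hy1 : off j 1 = off i (D+1) := by rw [hj, off_off]
  have hy2 : off j (m+5) = off i (D-1) := by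
    rw [hj, off_off]
    apply off_cast
    have h1 : (D-1) % (m+6) = D-1 := Nat.mod_eq_of_lt (by omega)
    have h2 : (D + (m+5)) % (m+6) = D-1 := hmodval (by omega) (by omega)
    rw [h1, h2]
  refine buildDS H i j (off i 1) (off i (m+5)) (off j 1) (off j (m+5)) hadj
    (step0 hcons i) (stepn hcons i).symm (step0 hcons j) (stepn hcons j).symm
    ?_ ?_ ?_ ?_ ?_ ?_ ?_ ?_ ?_ ?_
  · exact off_ne i (by omega) (by omega) (by omega)
  · rw [hy1, hy2]; exact off_ne i (by omega) (by omega) (by omega)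
  · rw [hy1]; exact off_ne i (by omega) (by omega) (by omega)
  · rw [hy2]; exact off_ne i (by omega) (by omega) (by omega)
  · rw [hy1]; exact off_ne i (by omega) (by omega) (by omega)
  · rw [hy2]; exact off_ne i (by omega) (by omega) (by omega)
  · rw [hj]; exact off_ne i (by omega) (by omega) (by omega)
  · rw [hj]; exact off_ne i (by omega) (by omega) (by omega)
  · rw [hy1]; exact off_ne0 i (by omega) (by omega)
  · rw [hy2]; exact off_ne0 i (by omega) (by omega)

include hnc in
lemma sep1 (w : Fin (m+6)) (h1 : H.Adj w (off w 2)) (h2 : H.Adj (off w 1) (off w 3)) :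
    False := by
  have hvlt : w.val < m+6 := w.isLt
  rcases Nat.lt_or_ge w.val (m+3) with hv | hv
  · have e1 : (off w 1).val = w.val + 1 := by rw [off_val]; exact Nat.mod_eq_of_lt (by omega)
    have e2 : (off w 2).val = w.val + 2 := by rw [off_val]; exact Nat.mod_eq_of_lt (by omega)
    have e3 : (off w 3).val = w.val + 3 := by rw [off_val]; exact Nat.mod_eq_of_lt (by omega)
    exact hnc w (off w 2) (off w 1) (off w 3) h1 h2
      ⟨by rw [Fin.lt_def, e1]; omega, by rw [Fin.lt_def, e1, e2]; omega,
       by rw [Fin.lt_def, e2, e3]; omega⟩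
  · rcases Nat.lt_or_ge w.val (m+4) with hv4 | hv4
    · have hw3 : w.val = m+3 := by omega
      have e1 : (off w 1).val = m+4 := by rw [off_val, hw3]; exact Nat.mod_eq_of_lt (by omega)
      have e2 : (off w 2).val = m+5 := by rw [off_val, hw3]; exact Nat.mod_eq_of_lt (by omega)
      have e3 : (off w 3).val = 0 := by rw [off_val, hw3]; exact hmodval (by omega) (by omega)
      exact hnc (off w 3) (off w 1) w (off w 2) h2.symm h1
        ⟨by rw [Fin.lt_def, e3]; omega, by rw [Fin.lt_def, e1]; omega,
         by rw [Fin.lt_def, e1, e2]; omega⟩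
    · rcases Nat.lt_or_ge w.val (m+5) with hv5 | hv5
      · have hw4 : w.val = m+4 := by omega
        have e1 : (off w 1).val = m+5 := by rw [off_val, hw4]; exact Nat.mod_eq_of_lt (by omega)
        have e2 : (off w 2).val = 0 := by rw [off_val, hw4]; exact hmodval (by omega) (by omega)
        have e3 : (off w 3).val = 1 := by rw [off_val, hw4]; exact hmodval (by omega) (by omega)
        exact hnc (off w 2) w (off w 3) (off w 1) h1.symm h2.symm
          ⟨by rw [Fin.lt_def, e2, e3]; omega, by rw [Fin.lt_def, e3, hw4]; omega,
           by rw [Fin.lt_def, e1, hw4]; omega⟩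
      · have hw5 : w.val = m+5 := by omega
        have e1 : (off w 1).val = 0 := by rw [off_val, hw5]; exact hmodval (by omega) (by omega)
        have e2 : (off w 2).val = 1 := by rw [off_val, hw5]; exact hmodval (by omega) (by omega)
        have e3 : (off w 3).val = 2 := by rw [off_val, hw5]; exact hmodval (by omega) (by omega)
        exact hnc (off w 1) (off w 3) (off w 2) w h2 h1.symm
          ⟨by rw [Fin.lt_def, e1, e2]; omega, by rw [Fin.lt_def, e2, e3]; omega,
           by rw [Fin.lt_def, e3, hw5]; omega⟩

include hcons in
lemma sep2 (w : Fin (m+6)) (h1 : H.Adj w (off w 2)) (h2 : H.Adj (off w 2) (off w 4)) :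
    ContainsDoubleStar H 2 2 := by
  refine buildDS H (off w 2) w (off w 3) (off w 4) (off w 1) (off w (m+5)) h1.symm
    (step hcons w 2) h2 (step0 hcons w) (stepn hcons w).symm
    ?_ ?_ ?_ ?_ ?_ ?_ ?_ ?_ ?_ ?_
  · exact off_ne w (by omega) (by omega) (by omega)
  · exact off_ne w (by omega) (by omega) (by omega)
  · exact off_ne w (by omega) (by omega) (by omega)
  · exact off_ne w (by omega) (by omega) (by omega)
  · exact off_ne w (by omega) (by omega) (by omega)
  · exact off_ne w (by omega) (by omega) (by omega)
  · exact off_ne0 w (by omega) (by omega)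
  · exact off_ne0 w (by omega) (by omega)
  · exact off_ne w (by omega) (by omega) (by omega)
  · exact off_ne w (by omega) (by omega) (by omega)

include hcons in
lemma sep3 (w : Fin (m+6)) (h1 : H.Adj w (off w 2)) (h2 : H.Adj (off w 3) (off w 5)) :
    ContainsDoubleStar H 2 2 := by
  have hx1 : H.Adj (off w 2) (off w 0) := by rw [off_zero]; exact h1.symm
  refine buildDS H (off w 2) (off w 3) (off w 0) (off w 1) (off w 4) (off w 5)
    (step hcons w 2) hx1 (step hcons w 1).symm (step hcons w 3) h2
    ?_ ?_ ?_ ?_ ?_ ?_ ?_ ?_ ?_ ?_ <;>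
    exact off_ne w (by omega) (by omega) (by omega)

include hnc hcons hfree in
lemma chordSep (w : Fin (m+6)) (h1 : H.Adj w (off w 2)) (d : ℕ) (hd1 : 1 ≤ d) (hd3 : d ≤ 3)
    (h2 : H.Adj (off w d) (off (off w d) 2)) : False := by
  rw [off_off] at h2
  interval_cases d
  · exact sep1 hnc w h1 h2
  · exact hfree (sep2 hcons w h1 h2)
  · exact hfree (sep3 hcons w h1 h2)

end Chord

theorem auxMain
    (hnc : ∀ a b c d : Fin (m+6), H.Adj a b → H.Adj c d → ¬ (a < c ∧ c < b ∧ b < d))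
    (hP1 : ∀ S : Set (Fin (m+6)), S.Nonempty → Sᶜ.Nonempty →
      ∃ a ∈ S, ∃ b, b ∉ S ∧ H.Adj a b)
    (hP2 : ∀ (v : Fin (m+6)) (S : Set (Fin (m+6))), v ∉ S → S.Nonempty → (Sᶜ \ {v}).Nonempty →
      ∃ a ∈ S, ∃ b, b ∉ S ∧ b ≠ v ∧ H.Adj a b)
    (hfree : ¬ ContainsDoubleStar H 2 2) :
    Nat.card H.edgeSet ≤ 5*(m+6)/4 := by
  classical
  have hcons := ham hnc hP1 hP2
  set C : Finset (Sym2 (Fin (m+6))) := Finset.image (fun a => s(a, off a 1)) Finset.univ with hCdef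
  set M : Finset (Fin (m+6)) := Finset.univ.filter (fun w => H.Adj w (off w 2)) with hMdef
  set D : Finset (Sym2 (Fin (m+6))) := M.image (fun w => s(w, off w 2)) with hDdef
  have key : ∀ i j : Fin (m+6), H.Adj i j → i.val < j.val → s(i,j) ∈ C ∪ D := by
    intro i j hadj hlt
    have hjlt : j.val < m+6 := j.isLt
    by_cases hd1 : j.val = i.val + 1
    · have hj : j = off i 1 := by
        apply Fin.ext; rw [off_val, Nat.mod_eq_of_lt (by omega)]; omega
      apply Finset.mem_union_left
      rw [hCdef]
      exact Finset.mem_image.mpr ⟨i, Finset.mem_univ i, by rw [hj]⟩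
    · by_cases hd2 : j.val = i.val + 2
      · have hj : j = off i 2 := by
          apply Fin.ext; rw [off_val, Nat.mod_eq_of_lt (by omega)]; omega
        apply Finset.mem_union_right
        rw [hDdef]
        refine Finset.mem_image.mpr ⟨i, ?_, by rw [hj]⟩
        rw [hMdef]
        exact Finset.mem_filter.mpr ⟨Finset.mem_univ i, by rw [← hj]; exact hadj⟩
      · by_cases hmed : j.val ≤ i.val + (m+3)
        · exact absurd (medium hcons i j hadj (by omega) (by omega)) hfree
        · by_cases hd4 : j.val = i.val + (m+4)
          · have hij : off j 2 = i := by
              apply Fin.ext; rw [off_val]; exact hmodval i.isLt (by omega)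
            apply Finset.mem_union_right
            rw [hDdef]
            refine Finset.mem_image.mpr ⟨j, ?_, ?_⟩
            · rw [hMdef]
              refine Finset.mem_filter.mpr ⟨Finset.mem_univ j, ?_⟩
              rw [hij]; exact hadj.symm
            · rw [hij, Sym2.eq_swap]
          · have hd5 : j.val = i.val + (m+5) := by omega
            have hij : off j 1 = i := by
              apply Fin.ext; rw [off_val]; exact hmodval i.isLt (by omega)
            apply Finset.mem_union_left
            rw [hCdef]
            refine Finset.mem_image.mpr ⟨j, Finset.mem_univ j, ?_⟩
            rw [hij, Sym2.eq_swap]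
  have hsub : H.edgeSet ⊆ ↑(C ∪ D) := by
    intro e
    refine Sym2.ind (fun i j => ?_) e
    intro he
    rw [SimpleGraph.mem_edgeSet] at he
    rcases lt_trichotomy i.val j.val with h | h | h
    · exact key i j he h
    · exact absurd (Fin.ext h) he.ne
    · rw [Sym2.eq_swap]; exact key j i he.symm h
  have hcard : Nat.card H.edgeSet ≤ (C ∪ D).card := by
    rw [Nat.card_coe_set_eq]
    calc H.edgeSet.ncard ≤ (↑(C ∪ D) : Set (Sym2 (Fin (m+6)))).ncard :=
          Set.ncard_le_ncard hsub (Finset.finite_toSet _)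
      _ = (C ∪ D).card := Set.ncard_coe_finset _
  have hC : C.card ≤ m+6 := by
    calc C.card ≤ Finset.univ.card := Finset.card_image_le
      _ = m+6 := by simp
  have hM : 4 * M.card ≤ m+6 := by
    have hinj : (M ×ˢ Finset.range 4).card ≤ (Finset.univ : Finset (Fin (m+6))).card := by
      apply Finset.card_le_card_of_injOn (fun p => off p.1 p.2)
      · intro p _; exact Finset.mem_univ _
      · intro p hp q hq heq
        replace heq : off p.1 p.2 = off q.1 q.2 := heq
        simp only [Finset.mem_coe, Finset.mem_product, Finset.mem_range, hMdef,
          Finset.mem_filter] at hp hq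
        obtain ⟨⟨-, hp1⟩, hp2⟩ := hp
        obtain ⟨⟨-, hq1⟩, hq2⟩ := hq
        have cancel : ∀ (x y : Fin (m+6)) (a b : ℕ), a < b → off x a = off y b →
            x = off y (b - a) := by
          intro x y a b hab hxy
          apply off_cancel (k := a)
          rw [hxy, off_off]
          congr 1
          omega
        rcases lt_trichotomy p.2 q.2 with h | h | h
        · exfalso
          have := cancel p.1 q.1 p.2 q.2 h heq
          exact chordSep hnc hcons hfree q.1 hq1 (q.2 - p.2) (by omega) (by omega)
            (by rw [← this]; exact hp1)
        · have h1 : p.1 = q.1 := by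
            apply off_cancel (k := p.2)
            rw [heq]
            congr 1
            omega
          exact Prod.ext h1 h
        · exfalso
          have := cancel q.1 p.1 q.2 p.2 h heq.symm
          exact chordSep hnc hcons hfree p.1 hp1 (p.2 - q.2) (by omega) (by omega)
            (by rw [← this]; exact hq1)
    rw [Finset.card_product, Finset.card_range, Finset.card_univ, Fintype.card_fin] at hinj
    omega
  have hD : D.card ≤ M.card := Finset.card_image_le
  have := Finset.card_union_le C D
  omega

end DSAux

theorem stmt2 {V : Type*} [Fintype V] (G : SimpleGraph V)
    (hn : 6 ≤ Nat.card V) (h2 : IsTwoConnected G) (hop : IsOuterplanar G)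
    (hfree : ¬ ContainsDoubleStar G 2 2) :
    Nat.card G.edgeSet ≤ 5 * Nat.card V / 4 := by
  classical
  obtain ⟨σ, hbij, hσ⟩ := hop
  obtain ⟨m, hm⟩ : ∃ m, Nat.card V = m + 6 := ⟨Nat.card V - 6, by omega⟩
  let e : V ≃ Fin (m+6) := (Equiv.ofBijective σ hbij).trans (finCongr hm)
  let H : SimpleGraph (Fin (m+6)) := G.comap ⇑e.symm
  have hAdj : ∀ a b : Fin (m+6), H.Adj a b ↔ G.Adj (e.symm a) (e.symm b) := fun _ _ => Iff.rfl
  have hesymm : ∀ a : Fin (m+6), (σ (e.symm a)).val = a.val := by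
    intro a
    have h1 : e (e.symm a) = a := e.apply_symm_apply a
    have h2 : (e (e.symm a)).val = ((σ (e.symm a)) : Fin (Nat.card V)).val := rfl
    rw [h1] at h2
    exact h2.symm
  have hnc : ∀ a b c d : Fin (m+6), H.Adj a b → H.Adj c d → ¬ (a < c ∧ c < b ∧ b < d) := by
    intro a b c d h1 h2' h3
    refine hσ (e.symm a) (e.symm b) (e.symm c) (e.symm d) h1 h2' ?_
    refine ⟨?_, ?_, ?_⟩
    · rw [Fin.lt_def, hesymm, hesymm]; exact h3.1
    · rw [Fin.lt_def, hesymm, hesymm]; exact h3.2.1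
    · rw [Fin.lt_def, hesymm, hesymm]; exact h3.2.2
  have hP1 : ∀ S : Set (Fin (m+6)), S.Nonempty → Sᶜ.Nonempty →
      ∃ a ∈ S, ∃ b, b ∉ S ∧ H.Adj a b := by
    intro S hS hSc
    obtain ⟨a0, ha0⟩ := hS
    obtain ⟨b0, hb0⟩ := hSc
    obtain ⟨p⟩ := h2.1.preconnected (e.symm a0) (e.symm b0)
    obtain ⟨d, -, hd1, hd2⟩ := p.exists_boundary_dart {x : V | e x ∈ S}
      (by simp only [Set.mem_setOf_eq, Equiv.apply_symm_apply]; exact ha0)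
      (by simp only [Set.mem_setOf_eq, Equiv.apply_symm_apply]; exact hb0)
    refine ⟨e d.fst, hd1, e d.snd, hd2, ?_⟩
    rw [hAdj]
    simp only [Equiv.symm_apply_apply]
    exact d.adj
  have hP2 : ∀ (v : Fin (m+6)) (S : Set (Fin (m+6))), v ∉ S → S.Nonempty → (Sᶜ \ {v}).Nonempty →
      ∃ a ∈ S, ∃ b, b ∉ S ∧ b ≠ v ∧ H.Adj a b := by
    intro v S hvS hS hSc
    obtain ⟨a0, ha0⟩ := hS
    obtain ⟨b0, hb0c, hb0v⟩ := hSc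
    have hav : e.symm a0 ∈ ({e.symm v}ᶜ : Set V) := by
      simp only [Set.mem_compl_iff, Set.mem_singleton_iff]
      intro h
      exact hvS ((e.symm.injective h) ▸ ha0)
    have hbv : e.symm b0 ∈ ({e.symm v}ᶜ : Set V) := by
      simp only [Set.mem_compl_iff, Set.mem_singleton_iff]
      intro h
      exact hb0v (e.symm.injective h)
    obtain ⟨p⟩ := (h2.2 (e.symm v)).preconnected ⟨e.symm a0, hav⟩ ⟨e.symm b0, hbv⟩
    obtain ⟨d, -, hd1, hd2⟩ := p.exists_boundary_dart {x : ({e.symm v}ᶜ : Set V) | e x.val ∈ S}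
      (by simp only [Set.mem_setOf_eq, Equiv.apply_symm_apply]; exact ha0)
      (by simp only [Set.mem_setOf_eq, Equiv.apply_symm_apply]; exact hb0c)
    refine ⟨e d.fst.val, hd1, e d.snd.val, hd2, ?_, ?_⟩
    · intro h
      have := d.snd.property
      simp only [Set.mem_compl_iff, Set.mem_singleton_iff] at this
      apply this
      apply_fun e using e.injective
      rw [Equiv.apply_symm_apply]
      exact h
    · rw [hAdj]
      simp only [Equiv.symm_apply_apply]
      exact d.adj
  have hfree' : ¬ ContainsDoubleStar H 2 2 := fun h =>
    hfree (DSAux.transferDS G H e (fun a b hab => hab) h)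
  have hiso : G ≃g H := ⟨e, by intro a b; simp [H, SimpleGraph.comap]⟩
  have hedge : Nat.card G.edgeSet = Nat.card H.edgeSet := Nat.card_congr hiso.mapEdgeSet
  rw [hm, hedge]
  exact DSAux.auxMain hnc hP1 hP2 hfree'
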